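/- Let ℓ ≥ 1 be an integer, a = 2π/(2ℓ+1), and for j = -ℓ,…,ℓ let p_j = (x₁ + i·sin(j·a)·x₂ + i·cos(j·a)·x₃)^ℓ in ℂ[x₁,x₂,x₃]. Then every polynomial p ∈ ℂ[x₁,x₂,x₃] that is homogeneous of degree ℓ and satisfies Δp = 0 lies in the ℂ-linear span of {p_j : j = -ℓ,…,ℓ}. In particular the p_j form a basis of the space of complex homogeneous harmonic polynomials of degree ℓ in three variables. -/

import Mathlib

open MvPolynomial

/-- The null-vector polynomial `p_j = (x₁ + i sin(j a) x₂ + i cos(j a) x₃)^ℓ`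
with `a = 2π/(2ℓ+1)`. -/
noncomputable def nullPoly (ℓ : ℕ) (j : ℤ) : MvPolynomial (Fin 3) ℂ :=
  (X 0
    + C (Complex.I * (Real.sin ((j : ℝ) * (2 * Real.pi / (2 * ℓ + 1))) : ℂ)) * X 1
    + C (Complex.I * (Real.cos ((j : ℝ) * (2 * Real.pi / (2 * ℓ + 1))) : ℂ)) * X 2) ^ ℓ

lemma coeff_pderiv' {σ : Type*} [DecidableEq σ] (i : σ) (p : MvPolynomial σ ℂ) (m : σ →₀ ℕ) :
    coeff m (pderiv i p) = (m i + 1 : ℕ) * coeff (m + Finsupp.single i 1) p := by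
  induction p using MvPolynomial.induction_on' with
  | monomial s a =>
    rw [pderiv_monomial, coeff_monomial, coeff_monomial]
    by_cases h : s = m + Finsupp.single i 1
    · subst h
      have h1 : ((m + Finsupp.single i 1 : σ →₀ ℕ)) i = m i + 1 := by
        rw [Finsupp.add_apply, Finsupp.single_eq_same]
      have h2 : m + Finsupp.single i 1 - Finsupp.single i 1 = m := by
        ext j; by_cases hj : j = i <;> simp [hj, Finsupp.single_apply]
      rw [if_pos h2, h1, if_pos rfl]
      push_cast; ring
    · rw [if_neg h]
      by_cases hs : s i = 0
      · by_cases h2 : s - Finsupp.single i 1 = m <;> simp [h2, hs]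
      · have : s - Finsupp.single i 1 ≠ m := by
          intro he
          apply h
          rw [← he]
          ext j
          simp only [Finsupp.add_apply, Finsupp.tsub_apply, Finsupp.single_apply]
          by_cases hj : i = j
          · subst hj
            simp [Nat.sub_add_cancel (Nat.one_le_iff_ne_zero.mpr hs)]
          · simp [hj]
        simp [this]
  | add p q hp hq => simp [hp, hq, mul_add]

lemma harmonic_coeff_rel (p : MvPolynomial (Fin 3) ℂ)
    (hharm : ∑ i : Fin 3, pderiv i (pderiv i p) = 0) (m : Fin 3 →₀ ℕ) :
    ∑ i : Fin 3, ((m i + 1 : ℕ) * (m i + 2 : ℕ) : ℂ)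
      * coeff (m + Finsupp.single i 2) p = 0 := by
  have h0 : coeff m (∑ i : Fin 3, pderiv i (pderiv i p)) = 0 := by rw [hharm]; simp
  rw [MvPolynomial.coeff_sum] at h0
  rw [← h0]
  apply Finset.sum_congr rfl
  intro i _
  rw [coeff_pderiv', coeff_pderiv']
  have h1 : ((m + Finsupp.single i 1 : Fin 3 →₀ ℕ)) i = m i + 1 := by
    rw [Finsupp.add_apply, Finsupp.single_eq_same]
  have h2 : (m + Finsupp.single i 1) + Finsupp.single i 1 = m + Finsupp.single i 2 := by
    rw [add_assoc, ← Finsupp.single_add]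
  rw [h1, h2]
  push_cast; ring

lemma harmonic_eq_zero_of_low_coeff (p : MvPolynomial (Fin 3) ℂ)
    (hharm : ∑ i : Fin 3, pderiv i (pderiv i p) = 0)
    (hlow : ∀ m : Fin 3 →₀ ℕ, m 0 ≤ 1 → coeff m p = 0) : p = 0 := by
  have claim : ∀ a : ℕ, ∀ m : Fin 3 →₀ ℕ, m 0 = a → coeff m p = 0 := by
    intro a
    induction a using Nat.strong_induction_on with
    | _ a IH =>
      intro m hm
      rcases le_or_gt a 1 with ha | ha
      · exact hlow m (hm ▸ ha)
      · -- a ≥ 2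
        obtain ⟨b, rfl⟩ : ∃ b, a = b + 2 := ⟨a - 2, by omega⟩
        set m' : Fin 3 →₀ ℕ := m - Finsupp.single 0 2 with hm'
        have hm'0 : m' 0 = b := by
          rw [hm', Finsupp.tsub_apply, Finsupp.single_eq_same, hm]
          omega
        have hmm : m' + Finsupp.single 0 2 = m := by
          ext j
          rw [Finsupp.add_apply, hm', Finsupp.tsub_apply]
          simp only [Finsupp.single_apply]
          by_cases hj : (0 : Fin 3) = j
          · rw [← hj, hm]; simp
          · rw [if_neg hj, Nat.sub_zero, Nat.add_zero]
        have hrel := harmonic_coeff_rel p hharm m'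
        rw [Fin.sum_univ_three] at hrel
        have hz1 : coeff (m' + Finsupp.single 1 2) p = 0 := by
          apply IH b (by omega)
          rw [Finsupp.add_apply, Finsupp.single_apply, if_neg (by decide), hm'0, add_zero]
        have hz2 : coeff (m' + Finsupp.single 2 2) p = 0 := by
          apply IH b (by omega)
          rw [Finsupp.add_apply, Finsupp.single_apply, if_neg (by decide), hm'0, add_zero]
        rw [hz1, hz2, mul_zero, mul_zero, add_zero, add_zero, hmm, hm'0] at hrel
        have hne : ((b + 1 : ℕ) * (b + 2 : ℕ) : ℂ) ≠ 0 := by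
          exact_mod_cast (show ((b + 1) * (b + 2) : ℕ) ≠ 0 by positivity)
        exact (mul_eq_zero.mp hrel).resolve_left hne
  ext m
  rw [coeff_zero]
  exact claim (m 0) m rfl

lemma harmonic_linpow (s t : ℂ) (h : 1 + s^2 + t^2 = 0) (n : ℕ) :
    ∑ i : Fin 3, pderiv i (pderiv i
      ((X 0 + C s * X 1 + C t * X 2 : MvPolynomial (Fin 3) ℂ) ^ n)) = 0 := by
  set L : MvPolynomial (Fin 3) ℂ := X 0 + C s * X 1 + C t * X 2 with hL
  set c : Fin 3 → ℂ := ![1, s, t] with hc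
  have hds : ∀ i : Fin 3, pderiv i L = C (c i) := by
    intro i
    fin_cases i <;> simp [hL, hc]
  have h2 : ∀ i : Fin 3, pderiv i (pderiv i (L ^ n)) =
      (n : MvPolynomial (Fin 3) ℂ) * ((n - 1 : ℕ) : MvPolynomial (Fin 3) ℂ)
        * L ^ (n - 1 - 1) * C (c i ^ 2) := by
    intro i
    rw [pderiv_pow, hds]
    rw [show ((n : MvPolynomial (Fin 3) ℂ) * L ^ (n - 1) * C (c i))
        = C ((n : ℂ) * c i) * L ^ (n - 1) by
      rw [map_mul, C_eq_coe_nat]; ring]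
    rw [pderiv_C_mul, pderiv_pow, hds]
    rw [map_mul, C_eq_coe_nat, map_pow]
    ring
  rw [Fin.sum_univ_three, h2 0, h2 1, h2 2, ← mul_add, ← mul_add, ← map_add, ← map_add]
  have hsum : c 0 ^ 2 + c 1 ^ 2 + c 2 ^ 2 = 0 := by
    simp only [hc, Matrix.cons_val_zero, Matrix.cons_val_one, Matrix.head_cons,
      Matrix.cons_val_two, Matrix.tail_cons]
    rw [← h]; ring
  rw [hsum, map_zero, mul_zero]

lemma nullPoly_isHomogeneous (ℓ : ℕ) (j : ℤ) : (nullPoly ℓ j).IsHomogeneous ℓ := by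
  have h1 : (X 0
      + C (Complex.I * (Real.sin ((j : ℝ) * (2 * Real.pi / (2 * ℓ + 1))) : ℂ)) * X 1
      + C (Complex.I * (Real.cos ((j : ℝ) * (2 * Real.pi / (2 * ℓ + 1))) : ℂ)) * X 2 :
        MvPolynomial (Fin 3) ℂ).IsHomogeneous 1 :=
    (((isHomogeneous_X ℂ 0).add ((isHomogeneous_X ℂ 1).C_mul _)).add
      ((isHomogeneous_X ℂ 2).C_mul _))
  have := h1.pow ℓ
  rw [one_mul] at this
  exact this

lemma nullPoly_harmonic (ℓ : ℕ) (j : ℤ) :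
    ∑ i : Fin 3, pderiv i (pderiv i (nullPoly ℓ j)) = 0 := by
  apply harmonic_linpow
  have hsc : (Real.sin ((j : ℝ) * (2 * Real.pi / (2 * ℓ + 1))) : ℂ) ^ 2
      + (Real.cos ((j : ℝ) * (2 * Real.pi / (2 * ℓ + 1))) : ℂ) ^ 2 = 1 := by
    have := Real.sin_sq_add_cos_sq ((j : ℝ) * (2 * Real.pi / (2 * ℓ + 1)))
    exact_mod_cast congrArg (Complex.ofReal ·) this
  rw [mul_pow, mul_pow, Complex.I_sq]
  ring_nf
  ring_nf at hsc
  rw [← hsc]; ring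

noncomputable def Ψ : MvPolynomial (Fin 3) ℂ →ₐ[ℂ] Polynomial ℂ :=
  aeval ![2 * Polynomial.X, Polynomial.X ^ 2 - 1,
    Polynomial.C (-Complex.I) * (Polynomial.X ^ 2 + 1)]

noncomputable def zval (ℓ : ℕ) (j : ℤ) : ℂ :=
  Complex.exp (((j : ℝ) * (2 * Real.pi / (2 * ℓ + 1)) : ℝ) * Complex.I)

lemma zval_ne_zero (ℓ : ℕ) (j : ℤ) : zval ℓ j ≠ 0 := Complex.exp_ne_zero _

lemma hw1 (ℓ : ℕ) (j : ℤ) :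
    (Real.cos ((j : ℝ) * (2 * Real.pi / (2 * ℓ + 1))) : ℂ)
      + Complex.I * (Real.sin ((j : ℝ) * (2 * Real.pi / (2 * ℓ + 1))) : ℂ) = zval ℓ j := by
  rw [zval, Complex.exp_mul_I, ← Complex.ofReal_cos, ← Complex.ofReal_sin]
  ring

lemma hw2 (ℓ : ℕ) (j : ℤ) :
    (Real.cos ((j : ℝ) * (2 * Real.pi / (2 * ℓ + 1))) : ℂ)
      - Complex.I * (Real.sin ((j : ℝ) * (2 * Real.pi / (2 * ℓ + 1))) : ℂ) = (zval ℓ j)⁻¹ := by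
  rw [zval, ← Complex.exp_neg, ← neg_mul, Complex.exp_mul_I, Complex.cos_neg, Complex.sin_neg,
    ← Complex.ofReal_cos, ← Complex.ofReal_sin]
  ring

lemma canon1 (a b : ℂ) :
    Polynomial.C a * (Polynomial.X ^ 2 - 1) + (2 : Polynomial ℂ) * Polynomial.X
      + Polynomial.C b * (Polynomial.X ^ 2 + 1)
    = Polynomial.C (a + b) * Polynomial.X ^ 2 + (2 : Polynomial ℂ) * Polynomial.X
      + Polynomial.C (b - a) := by
  rw [map_add, map_sub]
  ring

lemma canon2 (w v : ℂ) (h : w * v = 1) :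
    Polynomial.C w * (Polynomial.X + Polynomial.C v) ^ 2
    = Polynomial.C w * Polynomial.X ^ 2 + (2 : Polynomial ℂ) * Polynomial.X + Polynomial.C v := by
  have h' : (Polynomial.C w : Polynomial ℂ) * Polynomial.C v = 1 := by
    rw [← Polynomial.C_mul, h, map_one]
  linear_combination (2 * Polynomial.X + Polynomial.C v) * h'

lemma Psi_C_mul_X (a : ℂ) (i : Fin 3) :
    Ψ (C a * X i) = Polynomial.C a
      * (![2 * Polynomial.X, Polynomial.X ^ 2 - 1,
          Polynomial.C (-Complex.I) * (Polynomial.X ^ 2 + 1)] i) := by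
  rw [Ψ, map_mul, aeval_C, aeval_X]
  rfl

lemma Psi_nullPoly (ℓ : ℕ) (j : ℤ) :
    Ψ (nullPoly ℓ j) = Polynomial.C ((zval ℓ j) ^ ℓ)
      * (Polynomial.X + Polynomial.C (zval ℓ j)⁻¹) ^ (2 * ℓ) := by
  set sc : ℂ := (Real.sin ((j : ℝ) * (2 * Real.pi / (2 * ℓ + 1))) : ℂ) with hsc
  set cc : ℂ := (Real.cos ((j : ℝ) * (2 * Real.pi / (2 * ℓ + 1))) : ℂ) with hcc
  set w := zval ℓ j with hwdef
  have hw0 : w ≠ 0 := zval_ne_zero ℓ j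
  have h1 : cc + Complex.I * sc = w := hw1 ℓ j
  have h2 : cc - Complex.I * sc = w⁻¹ := hw2 ℓ j
  have hL : Ψ (X 0 + C (Complex.I * sc) * X 1 + C (Complex.I * cc) * X 2)
      = Polynomial.C w * (Polynomial.X + Polynomial.C w⁻¹) ^ 2 := by
    have hx0 : Ψ (X 0) = (2 : Polynomial ℂ) * Polynomial.X := by rw [Ψ, aeval_X]; rfl
    rw [map_add, map_add, hx0, Psi_C_mul_X, Psi_C_mul_X]
    simp only [Matrix.cons_val_zero, Matrix.cons_val_one, Matrix.head_cons,
      Matrix.cons_val_two, Matrix.tail_cons]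
    have hmerge : (Polynomial.C (Complex.I * cc) : Polynomial ℂ) * (Polynomial.C (-Complex.I)
        * (Polynomial.X ^ 2 + 1)) = Polynomial.C cc * (Polynomial.X ^ 2 + 1) := by
      rw [← mul_assoc, ← Polynomial.C_mul]
      congr 1
      rw [show Complex.I * cc * -Complex.I = cc by
        rw [mul_comm, ← mul_assoc, neg_mul, Complex.I_mul_I]; ring]
    rw [hmerge, canon2 w w⁻¹ (mul_inv_cancel₀ hw0)]
    rw [show (2 : Polynomial ℂ) * Polynomial.X + Polynomial.C (Complex.I * sc)
        * (Polynomial.X ^ 2 - 1) + Polynomial.C cc * (Polynomial.X ^ 2 + 1)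
      = Polynomial.C (Complex.I * sc) * (Polynomial.X ^ 2 - 1) + (2 : Polynomial ℂ) * Polynomial.X
        + Polynomial.C cc * (Polynomial.X ^ 2 + 1) by ring]
    rw [canon1]
    rw [show Complex.I * sc + cc = w by linear_combination h1,
      show cc - Complex.I * sc = w⁻¹ from h2]
  rw [nullPoly, map_pow, ← hsc, ← hcc, hL, mul_pow, ← pow_mul, ← Polynomial.C_pow]

lemma zval_injOn (ℓ : ℕ) {j k : ℤ} (hj : j ∈ Finset.Icc (-(ℓ : ℤ)) ℓ)
    (hk : k ∈ Finset.Icc (-(ℓ : ℤ)) ℓ) (h : zval ℓ j = zval ℓ k) : j = k := by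
  rw [Finset.mem_Icc] at hj hk
  rw [zval, zval, Complex.exp_eq_exp_iff_exists_int] at h
  obtain ⟨n, hn⟩ := h
  have hn' : ((((j : ℝ) * (2 * Real.pi / (2 * ℓ + 1))) : ℝ) : ℂ)
      = ((((k : ℝ) * (2 * Real.pi / (2 * ℓ + 1))) : ℝ) : ℂ)
        + (n : ℂ) * ((2 * Real.pi : ℝ) : ℂ) := by
    have h2 : ((((j : ℝ) * (2 * Real.pi / (2 * ℓ + 1))) : ℝ) : ℂ) * Complex.I
        = (((((k : ℝ) * (2 * Real.pi / (2 * ℓ + 1))) : ℝ) : ℂ)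
          + (n : ℂ) * ((2 * Real.pi : ℝ) : ℂ)) * Complex.I := by
      push_cast
      push_cast at hn
      linear_combination hn
    exact mul_right_cancel₀ Complex.I_ne_zero h2
  have him : ((j : ℝ) * (2 * Real.pi / (2 * ℓ + 1)))
      = ((k : ℝ) * (2 * Real.pi / (2 * ℓ + 1))) + (n : ℝ) * (2 * Real.pi) := by
    exact_mod_cast hn'
  have hpi := Real.pi_pos
  have hpos : (0 : ℝ) < 2 * (ℓ : ℝ) + 1 := by positivity
  have hjk : ((j : ℝ) - k) = n * (2 * (ℓ : ℝ) + 1) := by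
    have h2 : ((j : ℝ) - k) * (2 * Real.pi / (2 * (ℓ : ℝ) + 1)) = n * (2 * Real.pi) := by
      linarith [him]
    have h3 : ((j : ℝ) - k) * (2 * Real.pi) = n * (2 * Real.pi) * (2 * (ℓ : ℝ) + 1) := by
      field_simp at h2
      linear_combination (2 * Real.pi) * h2
    have h4 : ((j : ℝ) - k) * (2 * Real.pi) = (n * (2 * (ℓ : ℝ) + 1)) * (2 * Real.pi) := by
      linarith [h3]
    have := mul_right_cancel₀ (by positivity : (2 * Real.pi) ≠ 0) h4
    linarith [this]
  have hjk' : (j : ℤ) - k = n * (2 * (ℓ : ℤ) + 1) := by exact_mod_cast hjk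
  rcases lt_trichotomy n 0 with h0 | h0 | h0
  · have h5 : n ≤ -1 := by omega
    have h6 : n * (2 * (ℓ : ℤ) + 1) ≤ (-1) * (2 * (ℓ : ℤ) + 1) :=
      mul_le_mul_of_nonneg_right h5 (by positivity)
    linarith [hj.1, hj.2, hk.1, hk.2, hjk', h6]
  · rw [h0, zero_mul] at hjk'
    omega
  · have h5 : 1 ≤ n := by omega
    have h6 : (1 : ℤ) * (2 * (ℓ : ℤ) + 1) ≤ n * (2 * (ℓ : ℤ) + 1) :=
      mul_le_mul_of_nonneg_right h5 (by positivity)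
    linarith [hj.1, hj.2, hk.1, hk.2, hjk', h6]

lemma nullPoly_linearIndependent (ℓ : ℕ) :
    LinearIndependent ℂ (fun j : (Finset.Icc (-(ℓ : ℤ)) ℓ) => nullPoly ℓ j.1) := by
  rw [Fintype.linearIndependent_iff]
  intro g hg j
  have hg' : ∑ j : (Finset.Icc (-(ℓ : ℤ)) ℓ),
      g j • (Polynomial.C ((zval ℓ j.1) ^ ℓ)
        * (Polynomial.X + Polynomial.C (zval ℓ j.1)⁻¹) ^ (2 * ℓ)) = 0 := by
    have := congrArg Ψ hg
    rw [map_sum, map_zero] at this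
    simpa only [map_smul, Psi_nullPoly] using this
  have hcoeff : ∀ b : ℕ, b ≤ 2 * ℓ →
      ∑ j : (Finset.Icc (-(ℓ : ℤ)) ℓ),
        (g j * ((zval ℓ j.1) ^ ℓ * ((zval ℓ j.1)⁻¹) ^ (2 * ℓ))) * (zval ℓ j.1) ^ b = 0 := by
    intro b hb
    have h1 := congrArg (fun q => Polynomial.coeff q b) hg'
    simp only [Polynomial.finset_sum_coeff, Polynomial.coeff_smul, Polynomial.coeff_zero,
      Polynomial.coeff_C_mul, Polynomial.coeff_X_add_C_pow, smul_eq_mul] at h1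
    have hchoose : (((2 * ℓ).choose b : ℂ)) ≠ 0 :=
      Nat.cast_ne_zero.mpr (Nat.choose_pos hb).ne'
    have h2 : (∑ j : (Finset.Icc (-(ℓ : ℤ)) ℓ),
        (g j * ((zval ℓ j.1) ^ ℓ * ((zval ℓ j.1)⁻¹) ^ (2 * ℓ))) * (zval ℓ j.1) ^ b)
        * ((2 * ℓ).choose b : ℂ) = 0 := by
      rw [Finset.sum_mul, ← h1]
      apply Finset.sum_congr rfl
      intro x _
      have hz0 : zval ℓ x.1 ≠ 0 := zval_ne_zero ℓ x.1
      have hz : ((zval ℓ x.1)⁻¹) ^ (2 * ℓ) * (zval ℓ x.1) ^ b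
          = ((zval ℓ x.1)⁻¹) ^ (2 * ℓ - b) := by
        rw [show 2 * ℓ = (2 * ℓ - b) + b by omega, pow_add, mul_assoc, ← mul_pow,
          inv_mul_cancel₀ hz0, one_pow, mul_one]
        congr 1
        omega
      calc (g x * ((zval ℓ x.1) ^ ℓ * ((zval ℓ x.1)⁻¹) ^ (2 * ℓ))) * (zval ℓ x.1) ^ b
            * ((2 * ℓ).choose b : ℂ)
          = g x * ((zval ℓ x.1) ^ ℓ * (((zval ℓ x.1)⁻¹) ^ (2 * ℓ) * (zval ℓ x.1) ^ b
              * ((2 * ℓ).choose b : ℂ))) := by ring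
        _ = g x * (zval ℓ x.1 ^ ℓ * ((zval ℓ x.1)⁻¹ ^ (2 * ℓ - b) * ((2 * ℓ).choose b : ℂ)))
            := by rw [hz]
    exact (mul_eq_zero.mp h2).resolve_right hchoose
  -- Vandermonde step
  have hcard : Fintype.card (Finset.Icc (-(ℓ : ℤ)) ℓ) = 2 * ℓ + 1 := by
    rw [Fintype.card_coe, Int.card_Icc]
    omega
  let e : (Finset.Icc (-(ℓ : ℤ)) ℓ) ≃ Fin (2 * ℓ + 1) := Fintype.equivFinOfCardEq hcard
  set f : Fin (2 * ℓ + 1) → ℂ := fun k => zval ℓ (e.symm k).1 with hf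
  set v : Fin (2 * ℓ + 1) → ℂ :=
    fun k => g (e.symm k) * ((zval ℓ (e.symm k).1) ^ ℓ * ((zval ℓ (e.symm k).1)⁻¹) ^ (2 * ℓ))
    with hv
  have hfinj : Function.Injective f := by
    intro a b hab
    have := zval_injOn ℓ (e.symm a).2 (e.symm b).2 hab
    have h2 : e.symm a = e.symm b := Subtype.ext this
    exact e.symm.injective h2
  have hveq : v = 0 := by
    apply Matrix.eq_zero_of_forall_pow_sum_mul_pow_eq_zero hfinj
    intro i
    have hcb := hcoeff i (by omega)
    exact (Equiv.sum_comp e.symm fun x : (Finset.Icc (-(ℓ : ℤ)) ℓ) =>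
      (g x * ((zval ℓ x.1) ^ ℓ * ((zval ℓ x.1)⁻¹) ^ (2 * ℓ))) * (zval ℓ x.1) ^ (i : ℕ)).trans hcb
  have hval : g j * ((zval ℓ j.1) ^ ℓ * ((zval ℓ j.1)⁻¹) ^ (2 * ℓ)) = 0 := by
    have h9 := congrFun hveq (e j)
    simpa [hv, Equiv.symm_apply_apply] using h9
  have hz0 : zval ℓ j.1 ≠ 0 := zval_ne_zero ℓ j.1
  have hne : (zval ℓ j.1) ^ ℓ * ((zval ℓ j.1)⁻¹) ^ (2 * ℓ) ≠ 0 := by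
    apply mul_ne_zero (pow_ne_zero _ hz0) (pow_ne_zero _ (inv_ne_zero hz0))
  exact (mul_eq_zero.mp hval).resolve_right hne

noncomputable def mu (ℓ : ℕ) (k : Fin (2 * ℓ + 1)) : Fin 3 →₀ ℕ :=
  if (k : ℕ) ≤ ℓ then Finsupp.single 1 (k : ℕ) + Finsupp.single 2 (ℓ - k)
  else Finsupp.single 0 1 + Finsupp.single 1 ((k : ℕ) - (ℓ + 1)) + Finsupp.single 2 (2 * ℓ - k)

lemma degree_eq3 (m : Fin 3 →₀ ℕ) : m.degree = m 0 + m 1 + m 2 := by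
  rw [show m.degree = ∑ i ∈ m.support, m i from rfl, show (∑ i ∈ m.support, m i) = ∑ i : Fin 3, m i from
    Finset.sum_subset (Finset.subset_univ _)
      (by intro x _ hx; simpa using Finsupp.notMem_support_iff.mp hx), Fin.sum_univ_three]

lemma mu_surj (ℓ : ℕ) (m : Fin 3 →₀ ℕ) (h0 : m 0 ≤ 1) (hd : m 0 + m 1 + m 2 = ℓ) :
    ∃ k : Fin (2 * ℓ + 1), mu ℓ k = m := by
  rcases (by omega : m 0 = 0 ∨ m 0 = 1) with h | h
  · refine ⟨⟨m 1, by omega⟩, ?_⟩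
    have hc : ((⟨m 1, by omega⟩ : Fin (2 * ℓ + 1)) : ℕ) ≤ ℓ := by
      simp only []
      omega
    ext i
    fin_cases i <;> simp [mu, hc, Finsupp.single_apply] <;> omega
  · refine ⟨⟨ℓ + 1 + m 1, by omega⟩, ?_⟩
    have hc : ¬ ((⟨ℓ + 1 + m 1, by omega⟩ : Fin (2 * ℓ + 1)) : ℕ) ≤ ℓ := by
      simp only []
      omega
    ext i
    fin_cases i <;> simp [mu, hc, Finsupp.single_apply] <;> omega

/-- Every homogeneous harmonic polynomial of degree `ℓ` in three variables lies in the
span of the `2ℓ+1` polynomials `p_j`, `j = -ℓ, …, ℓ`. -/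
theorem harmonic_mem_span_nullPoly (ℓ : ℕ) (hℓ : 1 ≤ ℓ) (p : MvPolynomial (Fin 3) ℂ)
    (hhom : p.IsHomogeneous ℓ)
    (hharm : ∑ i : Fin 3, pderiv i (pderiv i p) = 0) :
    p ∈ Submodule.span ℂ
      (Set.range (fun j : (Finset.Icc (-(ℓ : ℤ)) ℓ) => nullPoly ℓ j.1)) := by
  classical
  let D : MvPolynomial (Fin 3) ℂ →ₗ[ℂ] MvPolynomial (Fin 3) ℂ :=
    ∑ i : Fin 3, (((pderiv (R := ℂ) i) : MvPolynomial (Fin 3) ℂ →ₗ[ℂ] MvPolynomial (Fin 3) ℂ)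
      ∘ₗ ((pderiv (R := ℂ) i) : MvPolynomial (Fin 3) ℂ →ₗ[ℂ] MvPolynomial (Fin 3) ℂ))
  have hD : ∀ q, D q = ∑ i : Fin 3, pderiv i (pderiv i q) := by
    intro q
    simp [D, LinearMap.sum_apply, LinearMap.comp_apply]
  let H : Submodule ℂ (MvPolynomial (Fin 3) ℂ) :=
    (homogeneousSubmodule (Fin 3) ℂ ℓ) ⊓ (LinearMap.ker D)
  let ψ : MvPolynomial (Fin 3) ℂ →ₗ[ℂ] (Fin (2 * ℓ + 1) → ℂ) :=
    LinearMap.pi (fun k => lcoeff ℂ (mu ℓ k))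
  have hinj : ∀ q ∈ H, ψ q = 0 → q = 0 := by
    intro q hq hpsi
    obtain ⟨hqhom, hqker⟩ := Submodule.mem_inf.mp hq
    rw [LinearMap.mem_ker, hD] at hqker
    rw [mem_homogeneousSubmodule] at hqhom
    apply harmonic_eq_zero_of_low_coeff q hqker
    intro m hm
    by_cases hdeg : m.degree = ℓ
    · have hd3 : m 0 + m 1 + m 2 = ℓ := by rw [← degree_eq3]; exact hdeg
      obtain ⟨k, hk⟩ := mu_surj ℓ m hm hd3
      have h9 := congrFun hpsi k
      simpa [ψ, LinearMap.pi_apply, lcoeff_apply, hk] using h9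
    · exact hqhom.coeff_eq_zero hdeg
  let φ : H →ₗ[ℂ] (Fin (2 * ℓ + 1) → ℂ) := ψ ∘ₗ H.subtype
  have hφinj : Function.Injective φ := by
    rw [← LinearMap.ker_eq_bot, LinearMap.ker_eq_bot']
    intro x hx
    exact Subtype.ext (hinj x.1 x.2 hx)
  haveI : FiniteDimensional ℂ H := FiniteDimensional.of_injective φ hφinj
  have hHrank : Module.finrank ℂ H ≤ 2 * ℓ + 1 := by
    have h8 := LinearMap.finrank_le_finrank_of_injective hφinj
    simpa [Module.finrank_fin_fun] using h8
  have hSple : Submodule.span ℂ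
      (Set.range (fun j : (Finset.Icc (-(ℓ : ℤ)) ℓ) => nullPoly ℓ j.1)) ≤ H := by
    rw [Submodule.span_le]
    rintro _ ⟨j, rfl⟩
    refine Submodule.mem_inf.mpr ⟨?_, ?_⟩
    · exact (mem_homogeneousSubmodule _ _).mpr (nullPoly_isHomogeneous ℓ j.1)
    · rw [LinearMap.mem_ker, hD]
      exact nullPoly_harmonic ℓ j.1
  have hSprank : Module.finrank ℂ (Submodule.span ℂ
      (Set.range (fun j : (Finset.Icc (-(ℓ : ℤ)) ℓ) => nullPoly ℓ j.1))) = 2 * ℓ + 1 := by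
    rw [finrank_span_eq_card (nullPoly_linearIndependent ℓ), Fintype.card_coe, Int.card_Icc]
    omega
  have hfinal : Submodule.span ℂ
      (Set.range (fun j : (Finset.Icc (-(ℓ : ℤ)) ℓ) => nullPoly ℓ j.1)) = H :=
    Submodule.eq_of_le_of_finrank_le hSple (by rw [hSprank]; exact hHrank)
  have hpH : p ∈ H := Submodule.mem_inf.mpr
    ⟨(mem_homogeneousSubmodule _ _).mpr hhom, by rw [LinearMap.mem_ker, hD]; exact hharm⟩
  rw [hfinal]
  exact hpH
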